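/- arXiv:1408.5864 — 3 statements merged into one kernel-verified Lean document; each statement's English description precedes it below -/
import Mathlib

section
/- Let a finite group G act on a set X. The quotient of the set I = {(x,g) ∈ X × G : g·x = x} by the G-action h·(x,g) = (h·x, h g h⁻¹) is in canonical bijection with the disjoint union, over a set of representatives g of conjugacy classes of G, of the quotients X^g / Z_g, where X^g is the fixed-point set of g and Z_g is the centralizer of g acting on X^g. -/
section Aux

variable {G X : Type*} [Group G] [MulAction G X]

theorem mk_out_eq (c : ConjClasses G) : ConjClasses.mk (Quotient.out c) = c :=
  Quotient.out_eq c

noncomputable def conjRep (g : G) : G :=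
  Classical.choose (isConj_iff.mp (ConjClasses.mk_eq_mk_iff_isConj.mp (mk_out_eq (ConjClasses.mk g)).symm))

theorem conjRep_spec (g : G) :
    conjRep g * g * (conjRep g)⁻¹ = Quotient.out (ConjClasses.mk g) :=
  Classical.choose_spec (isConj_iff.mp (ConjClasses.mk_eq_mk_iff_isConj.mp (mk_out_eq (ConjClasses.mk g)).symm))

end Aux

/-- The inertia set `{(x,g) : g • x = x}` modulo the `G`-action
`h • (x,g) = (h • x, h g h⁻¹)` is in bijection with the disjoint union over
conjugacy classes `c` of `G` of the quotients `X^g / Z_g`, where `g = c.out`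
is a representative, `X^g` is its fixed point set and `Z_g` its centralizer. -/
theorem inertia_of_global_quotient {G X : Type*} [Group G] [Finite G] [MulAction G X] :
    Nonempty (
      Quot (fun (p q : {p : X × G // p.2 • p.1 = p.1}) =>
        ∃ h : G, (q : X × G) = (h • (p : X × G).1, h * (p : X × G).2 * h⁻¹))
      ≃ (c : ConjClasses G) ×
          Quot (fun (x y : {x : X // (Quotient.out c) • x = x}) =>
            ∃ h ∈ Subgroup.centralizer {Quotient.out c}, (y : X) = h • (x : X))) := by
  classical
  set R : {p : X × G // p.2 • p.1 = p.1} → {p : X × G // p.2 • p.1 = p.1} → Prop :=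
    fun p q => ∃ h : G, (q : X × G) = (h • (p : X × G).1, h * (p : X × G).2 * h⁻¹) with hR
  set S : (c : ConjClasses G) → {x : X // (Quotient.out c) • x = x} →
      {x : X // (Quotient.out c) • x = x} → Prop :=
    fun c x y => ∃ h ∈ Subgroup.centralizer {Quotient.out c}, (y : X) = h • (x : X) with hS
  -- fixed point fact for the forward map
  have fix : ∀ (p : {p : X × G // p.2 • p.1 = p.1}),
      Quotient.out (ConjClasses.mk (p : X × G).2) • (conjRep (p : X × G).2 • (p : X × G).1)
        = conjRep (p : X × G).2 • (p : X × G).1 := by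
    rintro ⟨⟨x, g⟩, hp⟩
    simp only
    rw [← conjRep_spec g, mul_smul, mul_smul, inv_smul_smul, hp]
  -- forward map on representatives
  set F0 : {p : X × G // p.2 • p.1 = p.1} →
      (c : ConjClasses G) × Quot (S c) :=
    fun p => ⟨ConjClasses.mk (p : X × G).2,
      Quot.mk _ ⟨conjRep (p : X × G).2 • (p : X × G).1, fix p⟩⟩ with hF0
  -- a helper to produce sigma equalities
  have sigma_eq : ∀ (c d : ConjClasses G) (h : c = d) (a : {x : X // (Quotient.out c) • x = x})
      (b : {x : X // (Quotient.out d) • x = x})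
      (hab : ∃ k ∈ Subgroup.centralizer {Quotient.out d}, (b : X) = k • (a : X)),
      (⟨c, Quot.mk _ a⟩ : (c : ConjClasses G) × Quot (S c)) = ⟨d, Quot.mk _ b⟩ := by
    rintro c d rfl a b hab
    exact congrArg _ (Quot.sound hab)
  have F0resp : ∀ p q, R p q → F0 p = F0 q := by
    rintro ⟨⟨x, g⟩, hp⟩ ⟨⟨y, g'⟩, hq⟩ ⟨h, he⟩
    obtain ⟨h1, h2⟩ := Prod.mk.injEq .. ▸ he
    subst h1; subst h2
    have hc : ConjClasses.mk g = ConjClasses.mk (h * g * h⁻¹) :=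
      ConjClasses.mk_eq_mk_iff_isConj.mpr (isConj_iff.mpr ⟨h, rfl⟩)
    refine sigma_eq _ _ hc _ _ ⟨conjRep (h * g * h⁻¹) * h * (conjRep g)⁻¹, ?_, ?_⟩
    · rw [Subgroup.mem_centralizer_singleton_iff]
      have e1 := conjRep_spec g
      have e2 := conjRep_spec (h * g * h⁻¹)
      rw [← hc] at e2 ⊢
      conv_lhs => rw [← e1]
      conv_rhs => rw [← e2]
      group
    · simp only [mul_smul, inv_smul_smul]
  set F : Quot R → (c : ConjClasses G) × Quot (S c) := Quot.lift F0 F0resp with hF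
  -- backward map
  have B0resp : ∀ (c : ConjClasses G) (a b : {x : X // (Quotient.out c) • x = x}), S c a b →
      Quot.mk R ⟨((a : X), Quotient.out c), a.2⟩ = Quot.mk R ⟨((b : X), Quotient.out c), b.2⟩ := by
    rintro c a b ⟨k, kc, hk⟩
    refine Quot.sound ⟨k, ?_⟩
    rw [Subgroup.mem_centralizer_singleton_iff] at kc
    simp only [Prod.mk.injEq]
    constructor
    · exact hk
    · rw [kc]; group
  set B : ((c : ConjClasses G) × Quot (S c)) → Quot R :=
    fun t => Quot.lift (fun (a : {x : X // (Quotient.out t.1) • x = x}) => Quot.mk R ⟨((a : X), Quotient.out t.1), a.2⟩)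
      (B0resp t.1) t.2 with hB
  refine ⟨⟨F, B, ?_, ?_⟩⟩
  · -- left inverse : B ∘ F = id
    intro p
    induction p using Quot.ind with | _ p =>
    obtain ⟨⟨x, g⟩, hp⟩ := p
    simp only [hF, hB, hF0]
    exact (Quot.sound ⟨conjRep g, by simp only [Prod.mk.injEq]; exact ⟨trivial, (conjRep_spec g).symm⟩⟩).symm
  · -- right inverse : F ∘ B = id
    rintro ⟨c, q⟩
    induction q using Quot.ind with | _ a =>
    obtain ⟨x, hx⟩ := a
    simp only [hF, hB, hF0]
    refine sigma_eq _ _ (mk_out_eq c) _ _ ⟨(conjRep (Quotient.out c))⁻¹, ?_, by simp⟩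
    rw [Subgroup.mem_centralizer_singleton_iff]
    have e := conjRep_spec (Quotient.out c)
    rw [mk_out_eq c] at e
    have e' : conjRep (Quotient.out c) * Quotient.out c
        = Quotient.out c * conjRep (Quotient.out c) := by
      have := congrArg (fun z => z * conjRep (Quotient.out c)) e
      simpa [mul_assoc] using this
    have : Commute (conjRep (Quotient.out c)) (Quotient.out c) := e'
    exact this.inv_left.eq
end

section
/- Let μ₁,…,μ_k ∈ ℝ^n and suppose there exists ξ ∈ ℝ^n with ⟨μ_i, ξ⟩ > 0 for all i. Then for every ν ∈ ℝ^n the set {z ∈ ℂ^k : Σ_{i=1}^k μ_i |z_i|² = ν} is compact. Equivalently, the moment map Φ : ℂ^k → ℝ^n, Φ(z) = ν − ½ Σ_i μ_i |z_i|², is a proper map. -/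
open Finset

lemma moment_aux (n k : ℕ) (μ : Fin k → Fin n → ℝ) (ξ : Fin n → ℝ)
    (hξ : ∀ i, 0 < ∑ j, μ i j * ξ j) (S : Set (Fin n → ℝ)) (hS : IsCompact S) :
    IsCompact {z : EuclideanSpace ℂ (Fin k) | (∑ i, ‖z i‖ ^ 2 • μ i) ∈ S} := by
  have hGcont : Continuous fun z : EuclideanSpace ℂ (Fin k) => ∑ i, ‖z i‖ ^ 2 • μ i := by
    fun_prop
  have hLcont : Continuous fun y : Fin n → ℝ => ∑ j, y j * ξ j := by fun_prop
  -- bound on S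
  obtain ⟨M, hM⟩ : ∃ M, ∀ y ∈ S, (∑ j, y j * ξ j) ≤ M := by
    obtain ⟨M, hM⟩ := (hS.image hLcont).bddAbove
    exact ⟨M, fun y hy => hM ⟨y, hy, rfl⟩⟩
  have key : ∀ z : EuclideanSpace ℂ (Fin k), (∑ i, ‖z i‖ ^ 2 • μ i) ∈ S →
      ∀ i, ‖z i‖ ^ 2 ≤ M / (∑ j, μ i j * ξ j) := by
    intro z hz i
    have hL : (∑ j, (∑ i, ‖z i‖ ^ 2 • μ i) j * ξ j)
        = ∑ i, ‖z i‖ ^ 2 * ∑ j, μ i j * ξ j := by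
      simp only [Finset.sum_apply, Pi.smul_apply, smul_eq_mul, Finset.sum_mul, Finset.mul_sum]
      rw [Finset.sum_comm]
      congr 1; ext j; congr 1; ext i'; ring
    have h1 : ∑ i, ‖z i‖ ^ 2 * ∑ j, μ i j * ξ j ≤ M := hL ▸ hM _ hz
    have h2 : ‖z i‖ ^ 2 * (∑ j, μ i j * ξ j) ≤ ∑ i, ‖z i‖ ^ 2 * ∑ j, μ i j * ξ j := by
      apply Finset.single_le_sum (f := fun i => ‖z i‖ ^ 2 * ∑ j, μ i j * ξ j)
        (fun i' _ => mul_nonneg (by positivity) (hξ i').le) (Finset.mem_univ i)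
    rw [le_div_iff₀ (hξ i)]
    exact h2.trans h1
  apply Metric.isCompact_of_isClosed_isBounded
  · exact hS.isClosed.preimage hGcont
  · rw [Metric.isBounded_iff_subset_closedBall 0]
    refine ⟨Real.sqrt (∑ i, M / (∑ j, μ i j * ξ j)), fun z hz => ?_⟩
    simp only [Metric.mem_closedBall, dist_zero_right]
    rw [EuclideanSpace.norm_eq]
    apply Real.sqrt_le_sqrt
    exact Finset.sum_le_sum fun i _ => key z hz i

/-- If the weights `μ₁,…,μ_k` lie in an open half-space (`⟨μ_i, ξ⟩ > 0` for some `ξ`),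
then every level set `{z : Σ μ_i |z_i|² = ν}` is compact; equivalently, the moment map
`Φ(z) = ν − ½ Σ μ_i |z_i|²` is proper. -/
theorem moment_map_proper (n k : ℕ) (μ : Fin k → Fin n → ℝ) (ξ : Fin n → ℝ)
    (hξ : ∀ i, 0 < ∑ j, μ i j * ξ j) :
    (∀ ν : Fin n → ℝ,
      IsCompact {z : EuclideanSpace ℂ (Fin k) | ∑ i, ‖z i‖ ^ 2 • μ i = ν}) ∧
    (∀ ν : Fin n → ℝ,
      IsProperMap (fun z : EuclideanSpace ℂ (Fin k) =>
        ν - (1 / 2 : ℝ) • ∑ i, ‖z i‖ ^ 2 • μ i)) := by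
  constructor
  · intro ν
    exact moment_aux n k μ ξ hξ {ν} isCompact_singleton
  · intro ν
    rw [isProperMap_iff_isCompact_preimage]
    constructor
    · fun_prop
    · intro K hK
      have h : (fun z : EuclideanSpace ℂ (Fin k) =>
          ν - (1 / 2 : ℝ) • ∑ i, ‖z i‖ ^ 2 • μ i) ⁻¹' K
          = {z : EuclideanSpace ℂ (Fin k) |
              (∑ i, ‖z i‖ ^ 2 • μ i) ∈ (fun y => (2 : ℝ) • (ν - y)) '' K} := by
        ext z
        simp only [Set.mem_preimage, Set.mem_setOf_eq, Set.mem_image]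
        constructor
        · intro hz
          exact ⟨_, hz, by module⟩
        · rintro ⟨w, hw, hw2⟩
          have : w = ν - (1 / 2 : ℝ) • ∑ i, ‖z i‖ ^ 2 • μ i := by
            rw [← hw2]; module
          rwa [← this]
      rw [h]
      exact moment_aux n k μ ξ hξ _ (hK.image (by fun_prop))
end

section
/- Let ℂ* act on ℂ³ with coordinates (a₀, b₀, b₁) by λ·(a₀, b₀, b₁) = (λ² a₀, λ³ b₀, λ³ b₁). Then the quotient of U = {(a₀, b₀, b₁) : b₁ ≠ 0} by this action is in bijection with the quotient of ℂ² by the group μ₃ of cube roots of unity acting by ζ·(a, b) = (ζ² a, b). -/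
noncomputable def cbrt3 (z : ℂ) : ℂ := Complex.exp (Complex.log z / 3)

lemma cbrt3_ne_zero (z : ℂ) : cbrt3 z ≠ 0 := Complex.exp_ne_zero _

lemma cbrt3_pow (z : ℂ) (hz : z ≠ 0) : (cbrt3 z) ^ 3 = z := by
  rw [cbrt3, ← Complex.exp_nat_mul]
  have : (3 : ℕ) * (Complex.log z / 3) = Complex.log z := by push_cast; ring
  rw [this, Complex.exp_log hz]

def WP23.Rel1 (v w : {v : ℂ × ℂ × ℂ // v.2.2 ≠ 0}) : Prop :=
  ∃ c : ℂˣ, (w : ℂ × ℂ × ℂ) =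
    ((c : ℂ) ^ 2 * (v : ℂ × ℂ × ℂ).1, (c : ℂ) ^ 3 * (v : ℂ × ℂ × ℂ).2.1,
      (c : ℂ) ^ 3 * (v : ℂ × ℂ × ℂ).2.2)

def WP23.Rel2 (a b : ℂ × ℂ) : Prop := ∃ ζ : ℂ, ζ ^ 3 = 1 ∧ b = (ζ ^ 2 * a.1, a.2)

namespace WP23

noncomputable def g0 (v : {v : ℂ × ℂ × ℂ // v.2.2 ≠ 0}) : ℂ × ℂ :=
  ((cbrt3 v.1.2.2)⁻¹ ^ 2 * v.1.1, (cbrt3 v.1.2.2)⁻¹ ^ 3 * v.1.2.1)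

lemma g0_sound : ∀ v w, Rel1 v w → Quot.mk Rel2 (g0 v) = Quot.mk Rel2 (g0 w) := by
  rintro ⟨⟨a₀, b₀, b₁⟩, hb₁⟩ ⟨w, hw⟩ ⟨u, huw⟩
  subst huw
  apply Quot.sound
  have hb₁' : b₁ ≠ 0 := hb₁
  have hub : (u : ℂ) ^ 3 * b₁ ≠ 0 := mul_ne_zero (pow_ne_zero _ u.ne_zero) hb₁'
  have hr3 : (cbrt3 b₁) ^ 3 = b₁ := cbrt3_pow _ hb₁'
  have hs3 : (cbrt3 ((u : ℂ) ^ 3 * b₁)) ^ 3 = (u : ℂ) ^ 3 * b₁ := cbrt3_pow _ hub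
  have hrne : cbrt3 b₁ ≠ 0 := cbrt3_ne_zero _
  have hsne : cbrt3 ((u : ℂ) ^ 3 * b₁) ≠ 0 := cbrt3_ne_zero _
  refine ⟨(u : ℂ) * cbrt3 b₁ * (cbrt3 ((u : ℂ) ^ 3 * b₁))⁻¹, ?_, ?_⟩
  · field_simp
    rw [hr3, hs3]
  · simp only [g0, Prod.mk.injEq]
    constructor
    · field_simp
    · field_simp
      rw [hs3, hr3]
      ring

noncomputable def gmap : Quot Rel1 → Quot Rel2 :=
  Quot.lift (fun v => Quot.mk Rel2 (g0 v)) g0_sound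

lemma f0_sound : ∀ a b : ℂ × ℂ, Rel2 a b →
    Quot.mk Rel1 ⟨(a.1, a.2, 1), one_ne_zero⟩ = Quot.mk Rel1 ⟨(b.1, b.2, 1), one_ne_zero⟩ := by
  rintro a b ⟨ζ, hζ, rfl⟩
  have hζ0 : ζ ≠ 0 := by
    intro h; rw [h] at hζ; simp at hζ
  apply Quot.sound
  refine ⟨Units.mk0 ζ hζ0, ?_⟩
  simp [hζ]

noncomputable def fmap : Quot Rel2 → Quot Rel1 :=
  Quot.lift (fun a : ℂ × ℂ => Quot.mk Rel1 ⟨(a.1, a.2, 1), one_ne_zero⟩) f0_sound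

lemma left_inv : ∀ q, fmap (gmap q) = q := by
  refine Quot.ind ?_
  rintro ⟨⟨a₀, b₀, b₁⟩, hb₁⟩
  have hb₁' : b₁ ≠ 0 := hb₁
  have hr3 : (cbrt3 b₁) ^ 3 = b₁ := cbrt3_pow _ hb₁'
  have hrne : cbrt3 b₁ ≠ 0 := cbrt3_ne_zero _
  have key : ((⟨(a₀, b₀, b₁), hb₁⟩ : {v : ℂ × ℂ × ℂ // v.2.2 ≠ 0}) : ℂ × ℂ × ℂ) =
      ((cbrt3 b₁) ^ 2 * ((cbrt3 b₁)⁻¹ ^ 2 * a₀),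
       (cbrt3 b₁) ^ 3 * ((cbrt3 b₁)⁻¹ ^ 3 * b₀),
       (cbrt3 b₁) ^ 3 * 1) := by
    simp only [Prod.mk.injEq]
    refine ⟨?_, ?_, ?_⟩
    · field_simp
    · field_simp
    · rw [hr3, mul_one]
  exact Quot.sound ⟨Units.mk0 (cbrt3 b₁) hrne, key⟩

lemma right_inv : ∀ q, gmap (fmap q) = q := by
  refine Quot.ind ?_
  rintro ⟨a, b⟩
  have hr3 : (cbrt3 (1 : ℂ)) ^ 3 = 1 := cbrt3_pow _ one_ne_zero
  have hrne : cbrt3 (1 : ℂ) ≠ 0 := cbrt3_ne_zero _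
  have key : ((a, b) : ℂ × ℂ) =
      ((cbrt3 (1 : ℂ)) ^ 2 * ((cbrt3 (1 : ℂ))⁻¹ ^ 2 * a), (cbrt3 (1 : ℂ))⁻¹ ^ 3 * b) := by
    simp only [Prod.mk.injEq]
    refine ⟨?_, ?_⟩
    · field_simp
    · rw [inv_pow, hr3, inv_one, one_mul]
  exact Quot.sound ⟨cbrt3 (1 : ℂ), hr3, key⟩

noncomputable def theEquiv : Quot Rel1 ≃ Quot Rel2 := ⟨gmap, fmap, left_inv, right_inv⟩

end WP23

/-- For the `ℂ*`-action on `ℂ³` with weights `2,3,3`,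
`λ·(a₀,b₀,b₁) = (λ²a₀, λ³b₀, λ³b₁)`, the quotient of `{b₁ ≠ 0}` is in bijection
with `ℂ²/μ₃`, where the cube roots of unity act by `ζ·(a,b) = (ζ²a, b)`. -/
theorem affine_gauged_maps_to_weighted_P23_degree_third :
    Nonempty (
      Quot (fun v w : {v : ℂ × ℂ × ℂ // v.2.2 ≠ 0} =>
        ∃ c : ℂˣ, (w : ℂ × ℂ × ℂ) =
          ((c : ℂ) ^ 2 * (v : ℂ × ℂ × ℂ).1, (c : ℂ) ^ 3 * (v : ℂ × ℂ × ℂ).2.1,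
            (c : ℂ) ^ 3 * (v : ℂ × ℂ × ℂ).2.2))
      ≃ Quot (fun a b : ℂ × ℂ =>
        ∃ ζ : ℂ, ζ ^ 3 = 1 ∧ b = (ζ ^ 2 * a.1, a.2))) := by
  exact ⟨WP23.theEquiv⟩
end
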